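/- arXiv:2506.04657 — 4 statements merged into one kernel-verified Lean document; each statement's English description precedes it below -/
import Mathlib

section
/- Let k ≥ 2. A position S = (x_1, ..., x_n) is a P-position in normal play k-Bounded Greedy Nim if and only if one of the following holds: (a) β(S) is even and R(x_1 − x_2) = 0, or (b) β(S) is odd and (x_1, x_2, x_3) is k-good. -/
/-- One move in `k`-bounded greedy Nim on a descending-sorted list of heaps:
remove `t` stones with `1 ≤ t ≤ min x₁ k` from a heap with the largest
number of stones `x₁` (the head), and re-sort the result in descending order. -/
def BFollower (k : ℕ) (S S' : List ℕ) : Prop :=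
  ∃ t : ℕ, 1 ≤ t ∧ t ≤ min S.headI k ∧
    S' = List.orderedInsert (· ≥ ·) (S.headI - t) S.tail

/-- One move in greedy Nim: remove any `t` stones with `1 ≤ t ≤ x₁` from a heap
with the largest number of stones `x₁`, and re-sort in descending order. -/
def GFollower (S S' : List ℕ) : Prop :=
  ∃ t : ℕ, 1 ≤ t ∧ t ≤ S.headI ∧
    S' = List.orderedInsert (· ≥ ·) (S.headI - t) S.tail

theorem BFollower.sum_lt {k : ℕ} {S S' : List ℕ} (h : BFollower k S S') :
    S'.sum < S.sum := by
  obtain ⟨t, ht1, ht2, rfl⟩ := h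
  have htx : t ≤ S.headI := le_trans ht2 (min_le_left _ _)
  match S with
  | [] => simp [List.headI] at htx; omega
  | a :: l =>
      have hperm := List.perm_orderedInsert (· ≥ ·) (a - t) l
      have hsum : (List.orderedInsert (· ≥ ·) (a - t) l).sum = (a - t) + l.sum :=
        hperm.sum_eq
      simp only [List.headI, List.tail] at *
      simp [hsum]
      omega

theorem GFollower.sum_lt {S S' : List ℕ} (h : GFollower S S') :
    S'.sum < S.sum := by
  obtain ⟨t, ht1, ht2, rfl⟩ := h
  match S with
  | [] => simp [List.headI] at ht2; omega
  | a :: l =>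
      have hperm := List.perm_orderedInsert (· ≥ ·) (a - t) l
      have hsum : (List.orderedInsert (· ≥ ·) (a - t) l).sum = (a - t) + l.sum :=
        hperm.sum_eq
      simp only [List.headI, List.tail] at *
      simp [hsum]
      omega

/-- `S` is a P-position of `k`-bounded greedy Nim under the normal play
convention: the all-zero position is a P-position (it has no followers), and a
position is a P-position iff every follower is an N-position. -/
def NormalBP (k : ℕ) (S : List ℕ) : Prop :=
  ∀ S', BFollower k S S' → ¬ NormalBP k S'
termination_by S.sum
decreasing_by exact BFollower.sum_lt (by assumption)

/-- `S` is a P-position of `k`-bounded greedy Nim under the misère play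
convention: the all-zero position is an N-position, and any other position is a
P-position iff every follower is an N-position. -/
def MisereBP (k : ℕ) (S : List ℕ) : Prop :=
  S.sum ≠ 0 ∧ ∀ S', BFollower k S S' → ¬ MisereBP k S'
termination_by S.sum
decreasing_by exact BFollower.sum_lt (by assumption)

/-- Normal-play P-positions of greedy Nim. -/
def NormalGP (S : List ℕ) : Prop :=
  ∀ S', GFollower S S' → ¬ NormalGP S'
termination_by S.sum
decreasing_by exact GFollower.sum_lt (by assumption)

/-- Misère-play P-positions of greedy Nim. -/
def MisereGP (S : List ℕ) : Prop :=
  S.sum ≠ 0 ∧ ∀ S', GFollower S S' → ¬ MisereGP S'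
termination_by S.sum
decreasing_by exact GFollower.sum_lt (by assumption)

/-- `R a` is the remainder of `a` modulo `k + 1`. -/
def R (k a : ℕ) : ℕ := a % (k + 1)

/-- The `j`-th heap (1-based) of the position `S`. -/
def heap (S : List ℕ) (j : ℕ) : ℕ := S.getD (j - 1) 0

/-- `β(S)`: `0` if `x₃ = 0`, and `max { j : x_j = x₃ } - 2` otherwise. -/
noncomputable def beta (S : List ℕ) : ℕ :=
  if heap S 3 = 0 then 0
  else sSup {j : ℕ | 1 ≤ j ∧ j ≤ S.length ∧ heap S j = heap S 3} - 2

/-- `α(S)`: `0` if `x₁ = 0`, and `max { j : x_j = x₁ }` otherwise. -/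
noncomputable def alpha (S : List ℕ) : ℕ :=
  if heap S 1 = 0 then 0
  else sSup {j : ℕ | 1 ≤ j ∧ j ≤ S.length ∧ heap S j = heap S 1}

/-- The pair `(x₁, x₂)` (with `x₁ ≥ x₂`) is `k`-nice. -/
def KNice (k x₁ x₂ : ℕ) : Prop :=
  (R k x₁ = 0 ∧ R k x₂ = 1) ∨
  (R k (x₁ - x₂) = 0 ∧ 2 ≤ R k x₂) ∨
  (R k x₁ = 1 ∧ R k x₂ = 0)

/-- The triple `(x₁, x₂, x₃)` (with `x₁ ≥ x₂ ≥ x₃`) is `k`-good. -/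
def KGood (k x₁ x₂ x₃ : ℕ) : Prop :=
  (R k (x₁ - x₂) = k ∧ R k (x₂ - x₃) = 0) ∨
  (R k (x₁ - x₂) = 0 ∧ 1 ≤ R k (x₂ - x₃) ∧ R k (x₂ - x₃) ≤ k - 1) ∨
  (R k (x₁ - x₂) = 1 ∧ R k (x₂ - x₃) = k)


/-- The condition of the main theorem characterizing misère P-positions of
`k`-bounded greedy Nim. -/
noncomputable def MiserePCond (k : ℕ) (S : List ℕ) : Prop :=
  (heap S 3 ≤ 1 ∧ Even (beta S) ∧ KNice k (heap S 1) (heap S 2)) ∨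
  (heap S 3 ≤ 1 ∧ Odd (beta S) ∧ R k (heap S 1 - heap S 2) = 0) ∨
  (2 ≤ heap S 3 ∧ Even (beta S) ∧ R k (heap S 1 - heap S 2) = 0) ∨
  (2 ≤ heap S 3 ∧ Odd (beta S) ∧ KGood k (heap S 1) (heap S 2) (heap S 3))

section BGNhelpers

private lemma mod_small {k a : ℕ} (h : a ≤ k) : a % (k+1) = a := Nat.mod_eq_of_lt (by omega)

private lemma mod_sub_ne {k a t : ℕ} (ht1 : 1 ≤ t) (htk : t ≤ k) (hta : t ≤ a) :
    (a - t) % (k+1) ≠ a % (k+1) := by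
  intro h
  have h2 : (a - t) ≡ a [MOD k+1] := h
  have h3 : (k+1) ∣ a - (a-t) := (Nat.modEq_iff_dvd' (Nat.sub_le a t)).mp h2
  have h4 : a - (a - t) = t := by omega
  rw [h4] at h3
  have := Nat.le_of_dvd (by omega) h3
  omega

private lemma mod_shift {k a t s : ℕ} (hta : t ≤ a) :
    (a - t) % (k+1) = s % (k+1) ↔ a % (k+1) = (s + t) % (k+1) := by
  constructor
  · intro h
    have h2 : (a - t) + t ≡ s + t [MOD k+1] := Nat.ModEq.add_right t h
    rwa [Nat.sub_add_cancel hta] at h2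
  · intro h
    have h2 : (a - t) + t ≡ s + t [MOD k+1] := by rwa [Nat.sub_add_cancel hta]
    exact Nat.ModEq.add_right_cancel' t h2

private lemma getD_anti {S : List ℕ} (h : S.Pairwise (· ≥ ·)) {i j : ℕ} (hij : i ≤ j) :
    S.getD j 0 ≤ S.getD i 0 := by
  by_cases hj : j < S.length
  · have hi : i < S.length := lt_of_le_of_lt hij hj
    rw [List.getD_eq_getElem _ _ hj, List.getD_eq_getElem _ _ hi]
    have := h.rel_get_of_le (a := ⟨i, hi⟩) (b := ⟨j, hj⟩) hij
    simpa using this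
  · rw [List.getD_eq_default _ _ (by omega)]
    exact Nat.zero_le _

@[simp] private lemma heap1 (a : ℕ) (l : List ℕ) : heap (a::l) 1 = a := rfl
@[simp] private lemma heap2 (a b : ℕ) (l : List ℕ) : heap (a::b::l) 2 = b := rfl
@[simp] private lemma heap3 (a b c : ℕ) (l : List ℕ) : heap (a::b::c::l) 3 = c := rfl
private lemma heap3' (a b : ℕ) (l : List ℕ) : heap (a::b::l) 3 = l.headI := by
  cases l <;> rfl

@[simp] private lemma heap4 (a b c d : ℕ) (l : List ℕ) : heap (a::b::c::d::l) 4 = d := rfl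

private lemma heap_anti {S : List ℕ} (h : S.Pairwise (· ≥ ·)) {i j : ℕ} (h1 : 1 ≤ i) (hij : i ≤ j) :
    heap S j ≤ heap S i := getD_anti h (by omega)

private lemma heap_cons_cons (a b : ℕ) (l : List ℕ) {j : ℕ} (hj : 3 ≤ j) :
    heap (a::b::l) j = l.getD (j-3) 0 := by
  obtain ⟨i, rfl⟩ : ∃ i, j = i + 3 := ⟨j - 3, by omega⟩
  show (a::b::l).getD (i+2) 0 = l.getD i 0
  simp [List.getD_cons_succ]

private lemma oi_ge {u b : ℕ} (l : List ℕ) (h : b ≤ u) :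
    List.orderedInsert (· ≥ ·) u (b::l) = u :: b :: l := by
  simp [List.orderedInsert, h]

private lemma oi_lt {u b : ℕ} (l : List ℕ) (h : u < b) :
    List.orderedInsert (· ≥ ·) u (b::l) = b :: List.orderedInsert (· ≥ ·) u l := by
  simp [List.orderedInsert]
  omega

private lemma getD_all_ne {l : List ℕ} {z : ℕ} (hz : 0 < z) (h : ∀ a ∈ l, a < z) (i : ℕ) :
    l.getD i 0 ≠ z := by
  by_cases hi : i < l.length
  · rw [List.getD_eq_getElem _ _ hi]
    exact Nat.ne_of_lt (h _ (List.getElem_mem hi))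
  · rw [List.getD_eq_default _ _ (by omega)]; omega

private lemma getD_oi {u z : ℕ} (huz : u < z) (l : List ℕ) (hl : l.Pairwise (· ≥ ·)) :
    ∀ i, ((List.orderedInsert (· ≥ ·) u l).getD i 0 = z ↔ l.getD i 0 = z) := by
  induction l with
  | nil =>
      intro i
      have h1 : (List.orderedInsert (· ≥ ·) u ([]:List ℕ)) = [u] := rfl
      rw [h1]
      constructor
      · intro h; exact absurd h (getD_all_ne (by omega) (by intro a ha; simp at ha; omega) i)
      · intro h; exact absurd h (getD_all_ne (by omega) (by simp) i)
  | cons b l ih =>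
      intro i
      rcases le_or_gt b u with hbu | hbu
      · rw [oi_ge l hbu]
        have hble : ∀ a ∈ b :: l, a < z := by
          intro a ha
          rcases List.mem_cons.mp ha with rfl | ha
          · omega
          · have := List.rel_of_pairwise_cons hl ha; simp at this; omega
        constructor
        · intro h
          refine absurd h (getD_all_ne (by omega) ?_ i)
          intro a ha
          rcases List.mem_cons.mp ha with rfl | ha
          · omega
          · exact hble a ha
        · intro h; exact absurd h (getD_all_ne (by omega) hble i)
      · rw [oi_lt l hbu]
        cases i with
        | zero => simp
        | succ n => simpa using ih (List.pairwise_cons.mp hl).2 n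

private lemma le_headI_oi (u : ℕ) (l : List ℕ) : u ≤ (List.orderedInsert (· ≥ ·) u l).headI := by
  cases l with
  | nil => simp [List.orderedInsert]
  | cons b l =>
      rcases le_or_gt b u with h | h
      · rw [oi_ge l h]; simp
      · rw [oi_lt l h]; simp; omega

private lemma headI_oi_le {u z : ℕ} (l : List ℕ) (hu : u ≤ z) (hl : ∀ a ∈ l, a ≤ z) :
    (List.orderedInsert (· ≥ ·) u l).headI ≤ z := by
  cases l with
  | nil => simpa [List.orderedInsert] using hu
  | cons b l =>
      rcases le_or_gt b u with h | h
      · rw [oi_ge l h]; simpa using hu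
      · rw [oi_lt l h]; simpa using hl b (by simp)

end BGNhelpers
section BGNbeta

private def Aset (S : List ℕ) : Set ℕ := {j : ℕ | 1 ≤ j ∧ j ≤ S.length ∧ heap S j = heap S 3}

private lemma beta_eq_of_ne {S : List ℕ} (hz : heap S 3 ≠ 0) : beta S = sSup (Aset S) - 2 := by
  rw [beta, if_neg hz]; rfl

private lemma beta_eq_zero {S : List ℕ} (hz : heap S 3 = 0) : beta S = 0 := by
  rw [beta, if_pos hz]

private lemma Aset_bdd (S : List ℕ) : BddAbove (Aset S) := ⟨S.length, fun j hj => hj.2.1⟩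

private lemma three_mem_Aset {S : List ℕ} (h3 : 3 ≤ S.length) : 3 ∈ Aset S := ⟨by omega, h3, rfl⟩

private lemma mem_Aset_of_heap {S : List ℕ} {j : ℕ} (hz : heap S 3 ≠ 0) (hj : 1 ≤ j)
    (h : heap S j = heap S 3) : j ∈ Aset S := by
  refine ⟨hj, ?_, h⟩
  by_contra hlen
  push_neg at hlen
  have h0 : heap S j = 0 := List.getD_eq_default _ _ (by omega)
  omega

private lemma mem_Aset_iff {S : List ℕ} (hz : heap S 3 ≠ 0) {j : ℕ} (hj : 1 ≤ j) :
    j ∈ Aset S ↔ heap S j = heap S 3 :=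
  ⟨fun h => h.2.2, fun h => mem_Aset_of_heap hz hj h⟩

private lemma sSup_Aset_mem {S : List ℕ} (h3 : 3 ≤ S.length) : sSup (Aset S) ∈ Aset S :=
  Nat.sSup_mem ⟨3, three_mem_Aset h3⟩ (Aset_bdd S)

private lemma three_le_sSup {S : List ℕ} (h3 : 3 ≤ S.length) : 3 ≤ sSup (Aset S) :=
  le_csSup (Aset_bdd S) (three_mem_Aset h3)

private lemma mem_Aset_of_le {S : List ℕ} (hs : S.Pairwise (· ≥ ·)) {i j : ℕ} (hi : 3 ≤ i)
    (hij : i ≤ j) (hj : j ∈ Aset S) : i ∈ Aset S := by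
  obtain ⟨hj1, hj2, hj3⟩ := hj
  refine ⟨by omega, by omega, ?_⟩
  have h1 : heap S i ≤ heap S 3 := heap_anti hs (by omega) hi
  have h2 : heap S j ≤ heap S i := heap_anti hs (by omega) hij
  omega

private lemma sSup_Aset_congr {S S' : List ℕ} (h3 : 3 ≤ S.length) (h3' : 3 ≤ S'.length)
    (hiff : ∀ j, 3 ≤ j → (j ∈ Aset S ↔ j ∈ Aset S')) : sSup (Aset S) = sSup (Aset S') := by
  have m1 := sSup_Aset_mem h3
  have m2 := sSup_Aset_mem h3'
  have l1 := three_le_sSup h3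
  have l2 := three_le_sSup h3'
  have a1 : sSup (Aset S) ≤ sSup (Aset S') := le_csSup (Aset_bdd S') ((hiff _ l1).mp m1)
  have a2 : sSup (Aset S') ≤ sSup (Aset S) := le_csSup (Aset_bdd S) ((hiff _ l2).mpr m2)
  omega

private lemma sSup_Aset_shift {S S' : List ℕ} (h3' : 3 ≤ S'.length) (h4 : 4 ∈ Aset S)
    (hiff : ∀ j, 3 ≤ j → (j ∈ Aset S' ↔ j + 1 ∈ Aset S)) :
    sSup (Aset S') = sSup (Aset S) - 1 := by
  have hbdd := Aset_bdd S
  have h3 : 3 ≤ S.length := le_trans (by norm_num) h4.2.1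
  have m1 := sSup_Aset_mem h3
  have l4 : 4 ≤ sSup (Aset S) := le_csSup hbdd h4
  have hm : sSup (Aset S) - 1 ∈ Aset S' := by
    refine (hiff _ (by omega)).mpr ?_
    have he : sSup (Aset S) - 1 + 1 = sSup (Aset S) := by omega
    rw [he]; exact m1
  have a1 : sSup (Aset S) - 1 ≤ sSup (Aset S') := le_csSup (Aset_bdd S') hm
  have m2 := sSup_Aset_mem h3'
  have l2 := three_le_sSup h3'
  have a2 : sSup (Aset S') + 1 ≤ sSup (Aset S) := le_csSup hbdd ((hiff _ l2).mp m2)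
  omega

/-- Changing the first two entries of a list does not change `beta`. -/
private lemma beta_congr2 (a b a' b' c : ℕ) (m : List ℕ) :
    beta (a'::b'::c::m) = beta (a::b::c::m) := by
  have hh : ∀ j, 3 ≤ j → heap (a'::b'::c::m) j = heap (a::b::c::m) j := by
    intro j hj
    rw [heap_cons_cons _ _ _ hj, heap_cons_cons _ _ _ hj]
  by_cases hz : c = 0
  · rw [beta_eq_zero (by simpa using hz), beta_eq_zero (by simpa using hz)]
  · have hz1 : heap (a::b::c::m) 3 ≠ 0 := by simpa using hz
    have hz2 : heap (a'::b'::c::m) 3 ≠ 0 := by simpa using hz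
    rw [beta_eq_of_ne hz1, beta_eq_of_ne hz2]
    congr 1
    refine sSup_Aset_congr (by simp) (by simp) ?_
    intro j hj
    rw [mem_Aset_iff hz2 (by omega), mem_Aset_iff hz1 (by omega), hh j hj, heap3, heap3]

/-- `beta` of the follower when the new value `u` drops strictly below `z` and
the fourth entry equals the third: it decreases by one. -/
private lemma beta_case3 {x y z u : ℕ} {r : List ℕ}
    (hs : (x::y::z::z::r).Pairwise (· ≥ ·)) (hu : u < z) :
    beta (y::z::(List.orderedInsert (· ≥ ·) u (z::r))) = beta (x::y::z::z::r) - 1 ∧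
    2 ≤ beta (x::y::z::z::r) := by
  have hwr : (z::r).Pairwise (· ≥ ·) := ((List.pairwise_cons.mp
    ((List.pairwise_cons.mp ((List.pairwise_cons.mp hs).2)).2)).2)
  have hzne : heap (x::y::z::z::r) 3 ≠ 0 := by simp; omega
  have hins_eq : List.orderedInsert (· ≥ ·) u (z::r) = z :: List.orderedInsert (· ≥ ·) u r :=
    oi_lt r hu
  have hz3' : heap (y::z::(List.orderedInsert (· ≥ ·) u (z::r))) 3 = z := by
    rw [hins_eq]; rfl
  have hzne' : heap (y::z::(List.orderedInsert (· ≥ ·) u (z::r))) 3 ≠ 0 := by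
    rw [hz3']; omega
  have h4 : 4 ∈ Aset (x::y::z::z::r) := ⟨by omega, by simp, by simp⟩
  have hiff : ∀ j, 3 ≤ j → (j ∈ Aset (y::z::(List.orderedInsert (· ≥ ·) u (z::r))) ↔
      j + 1 ∈ Aset (x::y::z::z::r)) := by
    intro j hj
    rw [mem_Aset_iff hzne' (by omega), mem_Aset_iff hzne (by omega), hz3']
    have e1 : heap (y::z::(List.orderedInsert (· ≥ ·) u (z::r))) j =
        (List.orderedInsert (· ≥ ·) u (z::r)).getD (j-3) 0 := heap_cons_cons _ _ _ hj
    have e2 : heap (x::y::z::z::r) (j+1) = (z::r).getD (j-3) 0 := by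
      rw [heap_cons_cons _ _ _ (by omega : 3 ≤ j+1)]
      have h5 : j + 1 - 3 = (j - 3) + 1 := by omega
      rw [h5]
      simp [List.getD_cons_succ]
    rw [e1, e2, heap3]
    exact getD_oi hu (z::r) hwr (j-3)
  have hlen' : 3 ≤ (y::z::(List.orderedInsert (· ≥ ·) u (z::r))).length := by
    rw [hins_eq]; simp
  have hshift := sSup_Aset_shift hlen' h4 hiff
  have l4 : 4 ≤ sSup (Aset (x::y::z::z::r)) := le_csSup (Aset_bdd _) h4
  rw [beta_eq_of_ne hzne, beta_eq_of_ne hzne', hshift]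
  omega

/-- When the 3rd heap is nonzero, `beta ≥ 2` iff the 4th heap equals the 3rd. -/
private lemma heap4_iff {S : List ℕ} (hs : S.Pairwise (· ≥ ·)) (hn : 4 ≤ S.length)
    (hz : heap S 3 ≠ 0) : (heap S 4 = heap S 3 ↔ 2 ≤ beta S) := by
  rw [beta_eq_of_ne hz]
  constructor
  · intro h
    have h4 : 4 ∈ Aset S := ⟨by omega, hn, h⟩
    have := le_csSup (Aset_bdd S) h4
    omega
  · intro h
    have h3 : 3 ≤ S.length := by omega
    have hm := sSup_Aset_mem h3
    have h4 : 4 ∈ Aset S := mem_Aset_of_le hs (by omega) (by omega) hm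
    exact h4.2.2

private lemma beta_pos {S : List ℕ} (hn : 3 ≤ S.length) (hz : heap S 3 ≠ 0) : 1 ≤ beta S := by
  rw [beta_eq_of_ne hz]
  have := three_le_sSup hn
  have hm := sSup_Aset_mem hn
  have h4 : 3 ∈ Aset S := three_mem_Aset hn
  -- need sSup ≥ 3, so beta = sSup - 2 ≥ 1
  omega

end BGNbeta
section BGNmain

private def Cond (k : ℕ) (S : List ℕ) : Prop :=
  (Even (beta S) ∧ R k (heap S 1 - heap S 2) = 0) ∨
  (Odd (beta S) ∧ KGood k (heap S 1) (heap S 2) (heap S 3))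

private lemma kgood_unique {k p q y z : ℕ} (hk : 2 ≤ k) (h1 : KGood k p y z)
    (h2 : KGood k q y z) : R k (p - y) = R k (q - y) := by
  simp only [KGood, R] at *
  omega

private lemma parity_clash {m n : ℕ} (h : m = n) (h1 : Even m) (h2 : Odd n) : False := by
  have := Nat.even_iff.mp h1; have := Nat.odd_iff.mp h2; omega

private lemma fwd {k x y z w : ℕ} {r : List ℕ} (hk : 2 ≤ k)
    (hs : (x::y::z::w::r).Pairwise (· ≥ ·)) {S' : List ℕ}
    (hf : BFollower k (x::y::z::w::r) S') (hC : Cond k (x::y::z::w::r)) :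
    ¬ Cond k S' := by
  obtain ⟨t, ht1, htm, hS'⟩ := hf
  simp only [List.headI, List.tail] at htm hS'
  have htk : t ≤ k := le_trans htm (min_le_right _ _)
  have htx : t ≤ x := le_trans htm (min_le_left _ _)
  obtain ⟨hb1, hs1⟩ := List.pairwise_cons.mp hs
  obtain ⟨hb2, hs2⟩ := List.pairwise_cons.mp hs1
  obtain ⟨hb3, hs3⟩ := List.pairwise_cons.mp hs2
  have hxy : y ≤ x := hb1 y (by simp)
  have hyz : z ≤ y := hb2 z (by simp)
  have hzw : w ≤ z := hb3 w (by simp)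
  rcases le_or_gt y (x - t) with hcase | hcase
  · -- Case 1 : u ≥ y, S' = (x-t)::y::z::w::r
    rw [oi_ge _ hcase] at hS'
    subst hS'
    have hbeta : beta ((x-t)::y::z::w::r) = beta (x::y::z::w::r) :=
      beta_congr2 x y _ _ z (w::r)
    intro hC'
    rw [Cond] at hC hC'
    simp only [heap1, heap2, heap3, R] at hC hC'
    rw [hbeta] at hC'
    have hne := mod_sub_ne (k := k) (a := x - y) ht1 htk (by omega)
    have hsub : x - t - y = x - y - t := by omega
    rcases hC with ⟨hev, h0⟩ | ⟨hod, hg⟩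
    · rcases hC' with ⟨_, h0'⟩ | ⟨hod', _⟩
      · rw [hsub] at h0'; exact hne (h0'.trans h0.symm)
      · exact parity_clash rfl hev hod'
    · rcases hC' with ⟨hev', _⟩ | ⟨_, hg'⟩
      · exact parity_clash rfl hev' hod
      · have hq := kgood_unique hk hg' hg
        simp only [R] at hq
        rw [hsub] at hq
        exact hne hq
  rcases le_or_gt z (x - t) with hcase2 | hcase3
  · -- Case 2 : z ≤ u < y, S' = y::(x-t)::z::w::r
    rw [oi_lt _ hcase, oi_ge _ hcase2] at hS'
    subst hS'
    have hbeta : beta (y::(x-t)::z::w::r) = beta (x::y::z::w::r) :=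
      beta_congr2 x y _ _ z (w::r)
    intro hC'
    rw [Cond] at hC hC'
    simp only [heap1, heap2, heap3, R] at hC hC'
    rw [hbeta] at hC'
    have hxyt : x - y < t := by omega
    rcases hC with ⟨hev, h0⟩ | ⟨hod, hg⟩
    · have hxy0 : x = y := by
        have := mod_small (k := k) (a := x - y) (by omega); omega
      rcases hC' with ⟨_, h0'⟩ | ⟨hod', _⟩
      · have he : y - (x - t) = t := by omega
        rw [he, mod_small htk] at h0'
        omega
      · exact parity_clash rfl hev hod'
    · rcases hC' with ⟨hev', _⟩ | ⟨_, hg'⟩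
      · exact parity_clash rfl hev' hod
      · simp only [KGood, R] at hg hg'
        rcases hg with ⟨e1, e2⟩ | ⟨e1, e2, e3⟩ | ⟨e1, e2⟩
        · -- (x-y)%K = k impossible since x-y ≤ t-1 ≤ k-1
          have := mod_small (k := k) (a := x - y) (by omega); omega
        · -- a = 0 : x = y
          have hxy0 : x = y := by
            have := mod_small (k := k) (a := x - y) (by omega); omega
          have hyu : y - (x - t) = t := by omega
          have huz : (x - t) - z = (y - z) - t := by omega
          rw [hyu, huz, mod_small htk] at hg'
          have htyz : t ≤ y - z := by omega
          rcases hg' with ⟨f1, f2⟩ | ⟨f1, f2, f3⟩ | ⟨f1, f2⟩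
          · -- t = k and ((y-z)-t)%K = 0 → (y-z)%K = t = k, contra e3
            have h5 : ((y-z) - t) % (k+1) = 0 % (k+1) := by simpa using f2
            have h6 := (mod_shift htyz).mp h5
            rw [Nat.zero_add, mod_small htk] at h6
            omega
          · omega
          · -- t = 1 and ((y-z)-t)%K = k → (y-z)%K = (k+t)%K = 0, contra e2
            have h5 : ((y-z) - t) % (k+1) = k % (k+1) := by
              rw [f2, mod_small (le_refl k)]
            have h6 := (mod_shift htyz).mp h5
            rw [f1] at h6
            have h7 : (k + 1) % (k + 1) = 0 := by simp
            rw [h7] at h6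
            omega
        · -- a = 1, b = k : x - y = 1
          have hxy1 : x - y = 1 := by
            have := mod_small (k := k) (a := x - y) (by omega); omega
          have ht2 : 2 ≤ t := by omega
          have hyu : y - (x - t) = t - 1 := by omega
          have huz : (x - t) - z = (y - z) - (t - 1) := by omega
          rw [hyu, huz, mod_small (by omega : t - 1 ≤ k)] at hg'
          have hyzk : k ≤ y - z := by
            have := Nat.mod_le (y - z) (k+1); omega
          rcases hg' with ⟨f1, f2⟩ | ⟨f1, f2, f3⟩ | ⟨f1, f2⟩
          · omega
          · omega
          · -- t - 1 = 1 and ((y-z)-(t-1))%K = k → (y-z)%K = (k+1)%K = 0 contra e2 = k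
            have h5 : ((y-z) - (t-1)) % (k+1) = k % (k+1) := by
              rw [f2, mod_small (le_refl k)]
            have h6 := (mod_shift (by omega : t - 1 ≤ y - z)).mp h5
            rw [f1] at h6
            have h7 : (k + 1) % (k + 1) = 0 := by simp
            rw [h7] at h6
            omega
  · -- Case 3 : u < z
    have hz1 : 1 ≤ z := by omega
    have hxz : x - z < t := by omega
    rw [oi_lt _ hcase, oi_lt _ hcase3] at hS'
    -- S' = y :: z :: orderedInsert u (w::r)
    have hv1 : x - t ≤ (List.orderedInsert (· ≥ ·) (x-t) (w::r)).headI :=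
      le_headI_oi _ _
    have hv2 : (List.orderedInsert (· ≥ ·) (x-t) (w::r)).headI ≤ z :=
      headI_oi_le _ (by omega) hb3
    intro hC'
    rw [Cond] at hC hC'
    subst hS'
    simp only [heap1, heap2, heap3, heap3', List.headI_cons, R] at hC hC' 
    rcases hC with ⟨hev, h0⟩ | ⟨hod, hg⟩
    · -- Even case : x = y
      have hxy0 : x = y := by
        have := mod_small (k := k) (a := x - y) (by omega); omega
      rcases eq_or_lt_of_le hyz with hyz0 | hyzlt
      · -- y = z, so x = y = z ; need w = z via beta parity
        have hzne : heap (x::y::z::w::r) 3 ≠ 0 := by simpa using (by omega : z ≠ 0)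
        have hwz : w = z := by
          by_contra hne
          have h4 : heap (x::y::z::w::r) 4 ≠ heap (x::y::z::w::r) 3 := by simpa using hne
          have hb := beta_pos (S := x::y::z::w::r) (by simp) hzne
          have h2b : ¬ 2 ≤ beta (x::y::z::w::r) := by
            intro h2b
            exact h4 ((heap4_iff hs (by simp) hzne).mpr h2b)
          have := Nat.even_iff.mp hev
          omega
        subst hwz
        obtain ⟨hbeq, hbge⟩ := beta_case3 (x := x) (u := x - t) hs hcase3
        rw [hbeq] at hC'
        -- heap S' 1 = y, heap S' 2 = z(=w) ...
        rcases hC' with ⟨hev', _⟩ | ⟨_, hg'⟩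
        · have := Nat.even_iff.mp hev; have := Nat.even_iff.mp hev'; omega
        · -- KGood k y w v with y = w(=z) : impossible
          simp only [KGood, R] at hg'
          have hv3 : (List.orderedInsert (· ≥ ·) (x-t) (w::r)).headI = w := by
            rw [oi_lt r hcase3]; rfl
          rw [hv3] at hg'
          have hyw : y - w = 0 := by omega
          have hww : w - w = 0 := by omega
          rw [hyw, hww] at hg'
          have h00 : (0:ℕ) % (k+1) = 0 := Nat.zero_mod _
          omega
      · -- y > z
        rcases hC' with ⟨_, h0'⟩ | ⟨_, hg'⟩
        · -- (y - z)%K = 0 but 1 ≤ y - z ≤ k-1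
          rw [mod_small (k := k) (a := y - z) (by omega)] at h0'
          omega
        · simp only [KGood, R] at hg'
          rw [mod_small (k := k) (a := y - z) (by omega)] at hg'
          set v := (List.orderedInsert (· ≥ ·) (x-t) (w::r)).headI with hv
          have hzv : z - v ≤ k - 1 := by omega
          rw [mod_small (k := k) (a := z - v) (by omega)] at hg'
          omega
    · -- Odd case : KGood k x y z with x - z ≤ k - 1 forces x = y, 1 ≤ y-z ≤ k-1
      simp only [KGood, R] at hg
      have hsm1 := mod_small (k := k) (a := x - y) (by omega : x - y ≤ k)
      have hsm2 := mod_small (k := k) (a := y - z) (by omega : y - z ≤ k)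
      have hxy0 : x = y := by omega
      have hb1' : 1 ≤ y - z := by omega
      have hb2' : y - z ≤ k - 1 := by omega
      rcases hC' with ⟨_, h0'⟩ | ⟨_, hg'⟩
      · rw [mod_small (k := k) (a := y - z) (by omega)] at h0'
        omega
      · simp only [KGood, R] at hg'
        rw [mod_small (k := k) (a := y - z) (by omega)] at hg'
        set v := (List.orderedInsert (· ≥ ·) (x-t) (w::r)).headI with hv
        have hzv : z - v ≤ k - 1 := by omega
        rw [mod_small (k := k) (a := z - v) (by omega)] at hg'
        omega

end BGNmain
private lemma bwd {k x y z w : ℕ} {r : List ℕ} (hk : 2 ≤ k)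
    (hs : (x::y::z::w::r).Pairwise (· ≥ ·)) (hC : ¬ Cond k (x::y::z::w::r)) :
    ∃ S', BFollower k (x::y::z::w::r) S' ∧ Cond k S' := by
  obtain ⟨hb1, hs1⟩ := List.pairwise_cons.mp hs
  obtain ⟨hb2, hs2⟩ := List.pairwise_cons.mp hs1
  obtain ⟨hb3, hs3⟩ := List.pairwise_cons.mp hs2
  have hxy : y ≤ x := hb1 y (by simp)
  have hyz : z ≤ y := hb2 z (by simp)
  have hzw : w ≤ z := hb3 w (by simp)
  obtain ⟨a, ha⟩ : ∃ a, (x - y) % (k+1) = a := ⟨_, rfl⟩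
  obtain ⟨b, hb⟩ : ∃ b, (y - z) % (k+1) = b := ⟨_, rfl⟩
  have hak : a ≤ k := by have := Nat.mod_lt (x - y) (y := k+1) (by omega); omega
  have hbk : b ≤ k := by have := Nat.mod_lt (y - z) (y := k+1) (by omega); omega
  have hale : a ≤ x - y := by have := Nat.mod_le (x - y) (k+1); omega
  have hble : b ≤ y - z := by have := Nat.mod_le (y - z) (k+1); omega
  rcases Nat.even_or_odd (beta (x::y::z::w::r)) with hev | hod
  · -- Even beta : a ≠ 0, play t = a
    have ha0 : a ≠ 0 := by
      intro h0
      exact hC (Or.inl ⟨hev, by simp only [R, heap1, heap2]; omega⟩)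
    refine ⟨(x-a)::y::z::w::r, ⟨a, by omega, le_min (by show _ ≤ x; omega) (by omega),
      (oi_ge (z::w::r) (by omega)).symm⟩, ?_⟩
    left
    constructor
    · rw [beta_congr2 x y _ _ z (w::r)]; exact hev
    · simp only [R, heap1, heap2]
      have he : x - a - y = (x - y) - a := by omega
      rw [he]
      have := (mod_shift (k := k) (s := 0) hale).mpr (by
        rw [Nat.zero_add, mod_small (by omega : a ≤ k)]; exact ha)
      simpa using this
  · -- Odd beta
    have hz1 : 1 ≤ z := by
      by_contra h0
      have hz0 : heap (x::y::z::w::r) 3 = 0 := by simp; omega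
      rw [beta_eq_zero hz0] at hod
      simp [Nat.odd_iff] at hod
    have hg : ¬ (a = k ∧ b = 0 ∨ a = 0 ∧ 1 ≤ b ∧ b ≤ k - 1 ∨ a = 1 ∧ b = k) := by
      intro h
      refine hC (Or.inr ⟨hod, ?_⟩)
      simp only [KGood, R, heap1, heap2, heap3]
      omega
    rcases le_or_gt b (k-1) with hbsmall | hbbig
    · rcases Nat.eq_zero_or_pos b with hb0 | hbpos
      · -- b = 0, a ≠ k
        have hank : a ≠ k := by omega
        rcases le_or_gt (a+1) (x - y) with hbig | hsmall
        · -- main move t = a+1, lands ≥ y, gives residue k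
          refine ⟨(x-(a+1))::y::z::w::r, ⟨a+1, by omega, le_min (by show _ ≤ x; omega) (by omega),
            (oi_ge (z::w::r) (by omega)).symm⟩, ?_⟩
          right
          constructor
          · rw [beta_congr2 x y _ _ z (w::r)]; exact hod
          · simp only [KGood, R, heap1, heap2, heap3]
            left
            constructor
            · have he : x - (a+1) - y = (x - y) - (a+1) := by omega
              rw [he]
              have := (mod_shift (k := k) (s := k) hbig).mpr (by
                have h2 : k + (a+1) = a + (k+1) := by omega
                rw [h2, Nat.add_mod_right, mod_small (by omega : a ≤ k)]; exact ha)
              rwa [mod_small (by omega : k ≤ k)] at this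
            · omega
        · -- x - y = a
          have hxya : x - y = a := by omega
          rcases eq_or_lt_of_le hyz with hyz0 | hyzlt
          · -- y = z : x = z + a
            rcases eq_or_ne w z with hwz | hwz
            · -- w = z : deep move, beta decreases by 1
              subst hwz
              refine ⟨y::w::(List.orderedInsert (· ≥ ·) (x-(a+1)) (w::r)),
                ⟨a+1, by omega, le_min (by show _ ≤ x; omega) (by omega), ?_⟩, ?_⟩
              · have hSeq : List.orderedInsert (· ≥ ·) (x-(a+1)) (y::w::w::r) =
                    y::w::(List.orderedInsert (· ≥ ·) (x-(a+1)) (w::r)) := by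
                  rw [oi_lt _ (by omega : x-(a+1) < y), oi_lt _ (by omega : x-(a+1) < w)]
                exact hSeq.symm
              · obtain ⟨hbeq, hbge⟩ := beta_case3 (x := x) (y := y) (z := w)
                  (u := x-(a+1)) (r := r) hs (by omega)
                left
                constructor
                · rw [hbeq]
                  rw [Nat.even_iff]; rw [Nat.odd_iff] at hod; omega
                · simp only [R, heap1, heap2]
                  omega
            · -- w < z : move to u = z - 1, position (z,z,z-1,...)
              have hwlt : w ≤ z - 1 := by omega
              refine ⟨y::z::(x-(a+1))::w::r, ⟨a+1, by omega, le_min (by show _ ≤ x; omega) (by omega), ?_⟩, ?_⟩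
              · show _ = List.orderedInsert (· ≥ ·) (x-(a+1)) (y::z::w::r)
                rw [oi_lt _ (by omega : x-(a+1) < y), oi_lt _ (by omega : x-(a+1) < z),
                  oi_ge _ (by omega : w ≤ x-(a+1))]
              · have hu : x - (a+1) = z - 1 := by omega
                rcases Nat.even_or_odd (beta (y::z::(x-(a+1))::w::r)) with hev' | hod'
                · exact Or.inl ⟨hev', by simp only [R, heap1, heap2]; omega⟩
                · refine Or.inr ⟨hod', ?_⟩
                  simp only [KGood, R, heap1, heap2, heap3]
                  right; left
                  have h1 : y - z = 0 := by omega
                  have h2 : z - (x - (a+1)) = 1 := by omega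
                  rw [h1, h2, Nat.zero_mod, mod_small (by omega : 1 ≤ k)]
                  omega
          · -- y > z : move to u = y - 1
            refine ⟨y::(x-(a+1))::z::w::r, ⟨a+1, by omega, le_min (by show _ ≤ x; omega) (by omega), ?_⟩, ?_⟩
            · show _ = List.orderedInsert (· ≥ ·) (x-(a+1)) (y::z::w::r)
              rw [oi_lt _ (by omega : x-(a+1) < y), oi_ge _ (by omega : z ≤ x-(a+1))]
            · right
              constructor
              · rw [beta_congr2 x y _ _ z (w::r)]; exact hod
              · simp only [KGood, R, heap1, heap2, heap3]
                right; right
                have h1 : y - (x-(a+1)) = 1 := by omega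
                have h2 : (x-(a+1)) - z = (y - z) - 1 := by omega
                rw [h1, h2, mod_small (by omega : 1 ≤ k)]
                refine ⟨rfl, ?_⟩
                have := (mod_shift (k := k) (s := k) (by omega : 1 ≤ y - z)).mpr (by
                  rw [Nat.mod_self]; omega)
                rwa [mod_small (by omega : k ≤ k)] at this
      · -- 1 ≤ b ≤ k-1 : a ≠ 0, play t = a
        have ha0 : a ≠ 0 := by omega
        refine ⟨(x-a)::y::z::w::r, ⟨a, by omega, le_min (by show _ ≤ x; omega) (by omega),
          (oi_ge (z::w::r) (by omega)).symm⟩, ?_⟩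
        right
        constructor
        · rw [beta_congr2 x y _ _ z (w::r)]; exact hod
        · simp only [KGood, R, heap1, heap2, heap3]
          right; left
          refine ⟨?_, by omega, by omega⟩
          have he : x - a - y = (x - y) - a := by omega
          rw [he]
          have := (mod_shift (k := k) (s := 0) hale).mpr (by
            rw [Nat.zero_add, mod_small (by omega : a ≤ k)]; exact ha)
          simpa using this
    · -- b = k : a ≠ 1
      have hbek : b = k := by omega
      have ha1 : a ≠ 1 := by omega
      rcases Nat.lt_or_ge a 2 with ha2 | ha2
      · -- a = 0
        have ha0 : a = 0 := by omega
        rcases Nat.eq_zero_or_pos (x - y) with hxy0 | hxypos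
        · -- x = y : play t = k from the top, land between z and y
          have hyzk : k ≤ y - z := by omega
          refine ⟨y::(y-k)::z::w::r, ⟨k, by omega, le_min (by show _ ≤ x; omega) (by omega), ?_⟩, ?_⟩
          · show _ = List.orderedInsert (· ≥ ·) (x-k) (y::z::w::r)
            have hxk : x - k = y - k := by omega
            rw [oi_lt _ (by omega : x-k < y), oi_ge _ (by omega : z ≤ x-k), hxk]
          · right
            constructor
            · rw [beta_congr2 x y _ _ z (w::r)]; exact hod
            · simp only [KGood, R, heap1, heap2, heap3]
              left
              have h1 : y - (y-k) = k := by omega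
              have h2 : (y-k) - z = (y - z) - k := by omega
              rw [h1, h2, mod_small (by omega : k ≤ k)]
              refine ⟨rfl, ?_⟩
              have := (mod_shift (k := k) (s := 0) hyzk).mpr (by
                rw [Nat.zero_add, mod_small (by omega : k ≤ k)]; omega)
              simpa using this
        · -- x - y ≥ k+1 : play t = k, land ≥ y
          have hxyk : k + 1 ≤ x - y := by
            have hdvd : (k+1) ∣ (x - y) := Nat.dvd_of_mod_eq_zero (by omega)
            exact Nat.le_of_dvd (by omega) hdvd
          refine ⟨(x-k)::y::z::w::r, ⟨k, by omega, le_min (by show _ ≤ x; omega) (by omega),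
            (oi_ge (z::w::r) (by omega)).symm⟩, ?_⟩
          right
          constructor
          · rw [beta_congr2 x y _ _ z (w::r)]; exact hod
          · simp only [KGood, R, heap1, heap2, heap3]
            right; right
            refine ⟨?_, by omega⟩
            have he : x - k - y = (x - y) - k := by omega
            rw [he]
            have := (mod_shift (k := k) (s := 1) (by omega : k ≤ x - y)).mpr (by
              have h3 : 1 + k = 0 + (k+1) := by omega
              rw [h3, Nat.add_mod_right, Nat.zero_mod]; omega)
            rwa [mod_small (by omega : 1 ≤ k)] at this
      · -- a ≥ 2 : play t = a - 1, land ≥ y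
        refine ⟨(x-(a-1))::y::z::w::r, ⟨a-1, by omega, le_min (by show _ ≤ x; omega) (by omega),
          (oi_ge (z::w::r) (by omega)).symm⟩, ?_⟩
        right
        constructor
        · rw [beta_congr2 x y _ _ z (w::r)]; exact hod
        · simp only [KGood, R, heap1, heap2, heap3]
          right; right
          refine ⟨?_, by omega⟩
          have he : x - (a-1) - y = (x - y) - (a-1) := by omega
          rw [he]
          have := (mod_shift (k := k) (s := 1) (by omega : a - 1 ≤ x - y)).mpr (by
            have h3 : 1 + (a-1) = a := by omega
            rw [h3, mod_small (by omega : a ≤ k)]; exact ha)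
          rwa [mod_small (by omega : 1 ≤ k)] at this
private lemma follower_sorted {k : ℕ} {S S' : List ℕ} (hs : S.Pairwise (· ≥ ·))
    (h : BFollower k S S') : S'.Pairwise (· ≥ ·) := by
  obtain ⟨t, _, _, rfl⟩ := h
  refine List.Pairwise.orderedInsert _ _ ?_
  cases S with
  | nil => simp
  | cons a l => exact (List.pairwise_cons.mp hs).2

private lemma follower_length {k : ℕ} {S S' : List ℕ} (hn : 1 ≤ S.length)
    (h : BFollower k S S') : S'.length = S.length := by
  obtain ⟨t, _, _, rfl⟩ := h
  rw [List.orderedInsert_length]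
  cases S with
  | nil => simp at hn
  | cons a l => simp

private lemma main_aux (k : ℕ) (hk : 2 ≤ k) :
    ∀ N S, S.sum ≤ N → 4 ≤ S.length → S.Pairwise (· ≥ ·) → (NormalBP k S ↔ Cond k S) := by
  intro N
  induction N using Nat.strong_induction_on with
  | _ N ih =>
    intro S hsum hn hs
    obtain ⟨x, y, z, w, r, rfl⟩ : ∃ x y z w r, S = x::y::z::w::r := by
      rcases S with _ | ⟨x, _ | ⟨y, _ | ⟨z, _ | ⟨w, r⟩⟩⟩⟩
      · simp at hn
      · simp at hn
      · simp at hn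
      · simp at hn
      · exact ⟨x, y, z, w, r, rfl⟩
    rw [NormalBP]
    constructor
    · intro h
      by_contra hC
      obtain ⟨S', hf, hC'⟩ := bwd hk hs hC
      have hlt := hf.sum_lt
      have hlen := follower_length (by simp) hf
      have hs' := follower_sorted hs hf
      exact h S' hf ((ih S'.sum (by omega) S' le_rfl (by simp at hlen ⊢; omega) hs').mpr hC')
    · intro hC S' hf hP'
      have hlt := hf.sum_lt
      have hlen := follower_length (by simp) hf
      have hs' := follower_sorted hs hf
      have hC' := (ih S'.sum (by omega) S' le_rfl (by simp at hlen ⊢; omega) hs').mp hP'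
      exact fwd hk hs hf hC hC'

theorem stmt2 (k : ℕ) (hk : 2 ≤ k) (S : List ℕ) (hn : 4 ≤ S.length) (hsorted : S.Pairwise (· ≥ ·)) :
    NormalBP k S ↔
      (Even (beta S) ∧ R k (heap S 1 - heap S 2) = 0) ∨
      (Odd (beta S) ∧ KGood k (heap S 1) (heap S 2) (heap S 3)) := by
  have h := main_aux k hk S.sum S le_rfl hn hsorted
  rw [Cond] at h
  exact h
end

section
/- A position S = (x_1, ..., x_n) is a P-position in normal play Greedy Nim if and only if α(S) is even. -/
lemma sorted_le_headI {S : List ℕ} (hs : S.Pairwise (· ≥ ·)) {x : ℕ} (hx : x ∈ S) :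
    x ≤ S.headI := by
  cases S with
  | nil => simp at hx
  | cons a l =>
    rcases List.mem_cons.mp hx with rfl | h
    · simp
    · exact (List.pairwise_cons.mp hs).1 x h

lemma headI_eq_max {S : List ℕ} (hs : S.Pairwise (· ≥ ·)) {m : ℕ}
    (hm : m ∈ S) (hmax : ∀ y ∈ S, y ≤ m) : S.headI = m := by
  cases S with
  | nil => simp at hm
  | cons a l => exact le_antisymm (hmax a (by simp)) (sorted_le_headI hs hm)

lemma heap_one (S : List ℕ) : heap S 1 = S.headI := by
  cases S <;> simp [heap]

lemma get_eq_iff_lt_count {a : ℕ} : ∀ {l : List ℕ}, l.Pairwise (· ≥ ·) →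
    (∀ x ∈ l, x ≤ a) → ∀ i (hi : i < l.length), (l.get ⟨i, hi⟩ = a ↔ i < l.count a) := by
  intro l
  induction l with
  | nil => intro _ _ i hi; simp at hi
  | cons b m ih =>
    intro hs hle i hi
    obtain ⟨hbm, hm⟩ := List.pairwise_cons.mp hs
    have hba : b ≤ a := hle b (by simp)
    by_cases hb : b = a
    · subst hb
      have hle' : ∀ x ∈ m, x ≤ b := hbm
      cases i with
      | zero => simp [List.count_cons]
      | succ i =>
        have := ih hm hle' i (by simpa using hi)
        simp only [List.get_cons_succ] at *
        rw [this]
        simp only [List.count_cons, beq_self_eq_true, if_true]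
        omega
    · have hnotm : a ∉ (b :: m) := by
        intro hmem
        rcases List.mem_cons.mp hmem with rfl | hmem'
        · exact hb rfl
        · have := hbm a hmem'
          omega
      have hc0 : (b :: m).count a = 0 := List.count_eq_zero.mpr hnotm
      rw [hc0]
      simp only [Nat.not_lt_zero, iff_false]
      intro hget
      exact hnotm (hget ▸ List.get_mem _ _)

lemma alpha_eq_count {S : List ℕ} (hs : S.Pairwise (· ≥ ·)) (h0 : S.headI ≠ 0) :
    alpha S = S.count S.headI := by
  have hSne : S ≠ [] := by rintro rfl; exact h0 rfl
  have hmem : S.headI ∈ S := by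
    cases S with
    | nil => exact absurd rfl hSne
    | cons a l => simp
  have hcpos : 1 ≤ S.count S.headI := List.count_pos_iff.mpr hmem
  have hcle : S.count S.headI ≤ S.length := List.count_le_length
  have hset : {j : ℕ | 1 ≤ j ∧ j ≤ S.length ∧ heap S j = heap S 1} =
      Set.Icc 1 (S.count S.headI) := by
    ext j
    simp only [Set.mem_setOf_eq, Set.mem_Icc, heap_one]
    constructor
    · rintro ⟨h1, h2, h3⟩
      have hj : j - 1 < S.length := by omega
      have : S.get ⟨j - 1, hj⟩ = S.headI := by
        rw [← h3]; simp [heap, List.getD_eq_getElem?_getD, List.getElem?_eq_getElem hj]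
      have := (get_eq_iff_lt_count hs (fun x hx => sorted_le_headI hs hx) (j - 1) hj).mp this
      exact ⟨h1, by omega⟩
    · rintro ⟨h1, h2⟩
      have hj : j - 1 < S.length := by omega
      have := (get_eq_iff_lt_count hs (fun x hx => sorted_le_headI hs hx) (j - 1) hj).mpr
        (by omega)
      refine ⟨h1, by omega, ?_⟩
      rw [← this]
      simp [heap, List.getD_eq_getElem?_getD, List.getElem?_eq_getElem hj]
  rw [alpha, if_neg (by rw [heap_one]; exact h0), hset, csSup_Icc hcpos]

lemma alpha_eq_zero_of_headI {S : List ℕ} (h : S.headI = 0) : alpha S = 0 := by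
  rw [alpha, if_pos (by rw [heap_one]; exact h)]

lemma alpha_perm {S' L : List ℕ} (hs' : S'.Pairwise (· ≥ ·)) (hperm : S'.Perm L) {m : ℕ}
    (hm : m ∈ L) (hmax : ∀ y ∈ L, y ≤ m) (hm0 : m ≠ 0) :
    alpha S' = L.count m := by
  have hh : S'.headI = m :=
    headI_eq_max hs' (hperm.mem_iff.mpr hm) (fun y hy => hmax y (hperm.mem_iff.mp hy))
  rw [alpha_eq_count hs' (by rw [hh]; exact hm0), hh, hperm.count_eq]

theorem stmt4 (S : List ℕ) (hn : 4 ≤ S.length) (hsorted : S.Pairwise (· ≥ ·)) :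
    NormalGP S ↔ Even (alpha S) := by
  match S, hn, hsorted with
  | x :: T, hn, hsorted => ?_
  obtain ⟨hxT, hT⟩ := List.pairwise_cons.mp hsorted
  by_cases hx0 : x = 0
  · subst hx0
    rw [alpha_eq_zero_of_headI (show (0 :: T).headI = 0 from rfl)]
    simp only [Even.zero, iff_true]
    rw [NormalGP]
    rintro S' ⟨t, ht1, ht2, _⟩ _
    simp only [List.headI] at ht2
    omega
  · have hc : alpha (x :: T) = (x :: T).count x := alpha_eq_count hsorted hx0
    have hcc : (x :: T).count x = T.count x + 1 := by simp [List.count_cons]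
    rw [hc, hcc]
    by_cases hcE : Even (T.count x + 1)
    · refine iff_of_true ?_ hcE
      rw [NormalGP]
      rintro S' ⟨t, ht1, ht2, rfl⟩
      simp only [List.headI, List.tail] at ht2 ⊢
      have hs' : (List.orderedInsert (· ≥ ·) (x - t) T).Pairwise (· ≥ ·) :=
        hT.orderedInsert _ _
      have hperm : (List.orderedInsert (· ≥ ·) (x - t) T).Perm ((x - t) :: T) :=
        List.perm_orderedInsert _ _ _
      have hlen : (List.orderedInsert (· ≥ ·) (x - t) T).length = T.length + 1 :=
        List.orderedInsert_length _ _ _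
      have hTx : 1 ≤ T.count x := by
        by_contra h
        have h0 : T.count x = 0 := by omega
        rw [h0] at hcE
        simp at hcE
      have hα' : alpha (List.orderedInsert (· ≥ ·) (x - t) T) = ((x - t) :: T).count x :=
        alpha_perm hs' hperm (List.mem_cons_of_mem _ (List.count_pos_iff.mp (by omega)))
          (by
            rintro y hy
            rcases List.mem_cons.mp hy with rfl | hy'
            · omega
            · exact hxT y hy') hx0
      have hne : (x - t) ≠ x := by omega
      have hcount' : ((x - t) :: T).count x = T.count x := by
        simp [List.count_cons, hne]
      have hlt : (List.orderedInsert (· ≥ ·) (x - t) T).sum < (x :: T).sum := by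
        have h1 := hperm.sum_eq
        simp only [List.sum_cons] at h1 ⊢
        omega
      have hIH := stmt4 (List.orderedInsert (· ≥ ·) (x - t) T)
        (by simp only [List.length_cons] at hn; omega) hs'
      intro hP
      have hEv := hIH.mp hP
      rw [hα', hcount'] at hEv
      exact (Nat.even_add_one.mp hcE) hEv
    · refine iff_of_false ?_ hcE
      have hEvc : Even (T.count x) := by
        rw [Nat.even_add_one] at hcE
        exact not_not.mp hcE
      have step : ∀ t : ℕ, 1 ≤ t → t ≤ x →
          Even (alpha (List.orderedInsert (· ≥ ·) (x - t) T)) → ¬ NormalGP (x :: T) := by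
        intro t ht1 ht2 hEv hP
        have hs' : (List.orderedInsert (· ≥ ·) (x - t) T).Pairwise (· ≥ ·) :=
          hT.orderedInsert _ _
        have hlen : (List.orderedInsert (· ≥ ·) (x - t) T).length = T.length + 1 :=
          List.orderedInsert_length _ _ _
        have hlt : (List.orderedInsert (· ≥ ·) (x - t) T).sum < (x :: T).sum := by
          have h1 := (List.perm_orderedInsert (· ≥ ·) (x - t) T).sum_eq
          simp only [List.sum_cons] at h1 ⊢
          omega
        have hIH := stmt4 (List.orderedInsert (· ≥ ·) (x - t) T)
          (by simp only [List.length_cons] at hn; omega) hs'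
        rw [NormalGP] at hP
        exact hP _ ⟨t, ht1, ht2, rfl⟩ (hIH.mpr hEv)
      intro hP
      by_cases hT1 : 1 ≤ T.count x
      · refine step x (by omega) le_rfl ?_ hP
        have hs' : (List.orderedInsert (· ≥ ·) (x - x) T).Pairwise (· ≥ ·) :=
          hT.orderedInsert _ _
        have hperm : (List.orderedInsert (· ≥ ·) (x - x) T).Perm ((x - x) :: T) :=
          List.perm_orderedInsert _ _ _
        have hα' : alpha (List.orderedInsert (· ≥ ·) (x - x) T) = ((x - x) :: T).count x :=
          alpha_perm hs' hperm (List.mem_cons_of_mem _ (List.count_pos_iff.mp (by omega)))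
            (by
              rintro y hy
              rcases List.mem_cons.mp hy with rfl | hy'
              · omega
              · exact hxT y hy') hx0
        rw [hα']
        have hcount' : ((x - x) :: T).count x = T.count x := by
          simp [List.count_cons, Nat.sub_self]
          omega
        rw [hcount']
        exact hEvc
      · have hxnot : x ∉ T := fun h => hT1 (List.count_pos_iff.mpr h)
        have hTne : T ≠ [] := by
          intro h
          rw [h] at hn
          simp at hn
        have h2mem : T.headI ∈ T := by
          cases T with
          | nil => exact absurd rfl hTne
          | cons a l => simp
        have h2le : T.headI ≤ x := hxT _ h2mem
        have h2lt : T.headI < x := lt_of_le_of_ne h2le (fun h => hxnot (h ▸ h2mem))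
        by_cases h20 : T.headI = 0
        · refine step x (by omega) le_rfl ?_ hP
          have hs' : (List.orderedInsert (· ≥ ·) (x - x) T).Pairwise (· ≥ ·) :=
            hT.orderedInsert _ _
          have hperm : (List.orderedInsert (· ≥ ·) (x - x) T).Perm ((x - x) :: T) :=
            List.perm_orderedInsert _ _ _
          have hhead0 : (List.orderedInsert (· ≥ ·) (x - x) T).headI = 0 := by
            apply headI_eq_max hs'
              (hperm.mem_iff.mpr (by rw [Nat.sub_self]; exact List.mem_cons_self (a := 0) (l := T)))
            intro y hy
            rcases List.mem_cons.mp (hperm.mem_iff.mp hy) with rfl | hy'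
            · omega
            · have := sorted_le_headI hT hy'
              omega
          rw [alpha_eq_zero_of_headI hhead0]
          exact Even.zero
        · by_cases hd : Even (T.count T.headI)
          · refine step x (by omega) le_rfl ?_ hP
            have hs' : (List.orderedInsert (· ≥ ·) (x - x) T).Pairwise (· ≥ ·) :=
              hT.orderedInsert _ _
            have hperm : (List.orderedInsert (· ≥ ·) (x - x) T).Perm ((x - x) :: T) :=
              List.perm_orderedInsert _ _ _
            have hα' : alpha (List.orderedInsert (· ≥ ·) (x - x) T)
                = ((x - x) :: T).count T.headI :=
              alpha_perm hs' hperm (List.mem_cons_of_mem _ h2mem)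
                (by
                  rintro y hy
                  rcases List.mem_cons.mp hy with rfl | hy'
                  · omega
                  · exact sorted_le_headI hT hy') h20
            rw [hα']
            have hcount' : ((x - x) :: T).count T.headI = T.count T.headI := by
              simp [List.count_cons, Nat.sub_self]
              omega
            rw [hcount']
            exact hd
          · refine step (x - T.headI) (by omega) (by omega) ?_ hP
            have hxx : x - (x - T.headI) = T.headI := by omega
            have hs' : (List.orderedInsert (· ≥ ·) (x - (x - T.headI)) T).Pairwise (· ≥ ·) :=
              hT.orderedInsert _ _
            have hperm : (List.orderedInsert (· ≥ ·) (x - (x - T.headI)) T).Perm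
                ((x - (x - T.headI)) :: T) := List.perm_orderedInsert _ _ _
            have hα' : alpha (List.orderedInsert (· ≥ ·) (x - (x - T.headI)) T)
                = ((x - (x - T.headI)) :: T).count T.headI :=
              alpha_perm hs' hperm
                (by rw [hxx]; exact List.mem_cons_self)
                (by
                  rintro y hy
                  rcases List.mem_cons.mp hy with rfl | hy'
                  · omega
                  · exact sorted_le_headI hT hy') h20
            rw [hα', hxx]
            have hcount' : (T.headI :: T).count T.headI = T.count T.headI + 1 := by
              simp [List.count_cons]
            rw [hcount']
            exact Nat.even_add_one.mpr hd
termination_by S.sum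
decreasing_by all_goals exact hlt
end

section
/- Let k ≥ 2 and let S = (x_1, ..., x_n) be a position with r_1 = R(x_1 − x_2) ≠ 0. Then removing r_1 stones is a legal move (1 ≤ r_1 ≤ min(x_1, k)), it is a stable move (x_1 − x_2 ≥ r_1), and the resulting follower position S' satisfies R(x_1' − x_2') = 0. -/
theorem stmt9 (k : ℕ) (hk : 2 ≤ k) (S : List ℕ) (hn : 4 ≤ S.length) (hsorted : S.Pairwise (· ≥ ·))
    (hr : R k (heap S 1 - heap S 2) ≠ 0) :
    1 ≤ R k (heap S 1 - heap S 2) ∧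
    R k (heap S 1 - heap S 2) ≤ min (heap S 1) k ∧
    R k (heap S 1 - heap S 2) ≤ heap S 1 - heap S 2 ∧
    R k (heap (List.orderedInsert (· ≥ ·)
          (heap S 1 - R k (heap S 1 - heap S 2)) S.tail) 1 -
        heap (List.orderedInsert (· ≥ ·)
          (heap S 1 - R k (heap S 1 - heap S 2)) S.tail) 2) = 0 := by
  match S, hn, hsorted, hr with
  | a :: b :: l, _, hsorted, hr =>
    have hab : b ≤ a := (List.pairwise_cons.mp hsorted).1 b List.mem_cons_self
    simp only [heap, R, show (1:ℕ)-1=0 from rfl, show (2:ℕ)-1=1 from rfl, List.getD_cons_zero, List.getD_cons_succ, List.tail_cons] at *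
    set r := (a - b) % (k + 1) with hrdef
    have hrle : r ≤ a - b := Nat.mod_le _ _
    have hrlt : r < k + 1 := Nat.mod_lt _ (by omega)
    have hcond : a - r ≥ b := by omega
    have hins : List.orderedInsert (· ≥ ·) (a - r) (b :: l) = (a - r) :: b :: l := by
      simp [List.orderedInsert, hcond]
    rw [hins]
    simp only [List.getD_cons_zero, List.getD_cons_succ]
    refine ⟨by omega, by omega, hrle, ?_⟩
    have : a - r - b = (a - b) - r := by omega
    have hq : a - b = (k + 1) * ((a - b) / (k + 1)) + r := by
      rw [hrdef]; exact (Nat.div_add_mod _ _).symm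
    rw [this, hq, Nat.add_sub_cancel, Nat.mul_mod_right]
end

section
/- Let k ≥ 2 and let S = (x_1, ..., x_n) be a position satisfying the misère P-condition. If removing t stones (1 ≤ t ≤ min(x_1, k)) is a stable move, i.e. x_1 − x_2 ≥ t, then the follower position S' does not satisfy the misère P-condition. -/
lemma key_mod (k t x : ℕ) (ht2 : t ≤ k) (htx : t ≤ x) :
    (x - t) % (k+1) + t = x % (k+1) ∨ (x - t) % (k+1) + t = x % (k+1) + (k+1) := by
  have ht : t % (k+1) = t := Nat.mod_eq_of_lt (by omega)
  have h : ((x - t) % (k+1) + t) % (k+1) = x % (k+1) := by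
    conv_rhs => rw [← Nat.sub_add_cancel htx, Nat.add_mod, ht]
  have hw : (x - t) % (k+1) < k+1 := Nat.mod_lt _ (by omega)
  rcases lt_or_ge ((x - t) % (k+1) + t) (k+1) with hu | hu
  · left; rw [Nat.mod_eq_of_lt hu] at h; omega
  · right
    rw [Nat.mod_eq_sub_mod hu, Nat.mod_eq_of_lt (by omega)] at h
    omega

lemma heap_cons (z : ℕ) (tl : List ℕ) (j : ℕ) (hj : 2 ≤ j) :
    heap (z :: tl) j = tl.getD (j - 2) 0 := by
  have h : j - 1 = (j - 2) + 1 := by omega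
  rw [heap, h, List.getD_cons_succ]

lemma beta_cons_eq (x y : ℕ) (tl : List ℕ) (h3 : 2 ≤ tl.length) (hx : tl.getD 1 0 < x) :
    beta (x :: tl) = beta (y :: tl) := by
  have hc3x : heap (x :: tl) 3 = tl.getD 1 0 := heap_cons x tl 3 (by omega)
  have hc3y : heap (y :: tl) 3 = tl.getD 1 0 := heap_cons y tl 3 (by omega)
  by_cases hc0 : tl.getD 1 0 = 0
  · rw [beta, beta, if_pos (hc3x.trans hc0), if_pos (hc3y.trans hc0)]
  · have hmem3x : 3 ∈ {j : ℕ | 1 ≤ j ∧ j ≤ (x :: tl).length ∧ heap (x :: tl) j = heap (x :: tl) 3} :=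
      ⟨by omega, by simp; omega, rfl⟩
    have hmem3y : 3 ∈ {j : ℕ | 1 ≤ j ∧ j ≤ (y :: tl).length ∧ heap (y :: tl) j = heap (y :: tl) 3} :=
      ⟨by omega, by simp; omega, rfl⟩
    have hbx : BddAbove {j : ℕ | 1 ≤ j ∧ j ≤ (x :: tl).length ∧ heap (x :: tl) j = heap (x :: tl) 3} :=
      ⟨tl.length + 1, fun j hj => by simpa using hj.2.1⟩
    have hby : BddAbove {j : ℕ | 1 ≤ j ∧ j ≤ (y :: tl).length ∧ heap (y :: tl) j = heap (y :: tl) 3} :=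
      ⟨tl.length + 1, fun j hj => by simpa using hj.2.1⟩
    have hsup : sSup {j : ℕ | 1 ≤ j ∧ j ≤ (x :: tl).length ∧ heap (x :: tl) j = heap (x :: tl) 3}
        = sSup {j : ℕ | 1 ≤ j ∧ j ≤ (y :: tl).length ∧ heap (y :: tl) j = heap (y :: tl) 3} := by
      apply le_antisymm
      · obtain ⟨h1, h2, h3'⟩ := Nat.sSup_mem ⟨3, hmem3x⟩ hbx
        set m := sSup {j : ℕ | 1 ≤ j ∧ j ≤ (x :: tl).length ∧ heap (x :: tl) j = heap (x :: tl) 3}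
        have hne : m ≠ 1 := by
          intro h
          rw [h, hc3x] at h3'
          have : heap (x :: tl) 1 = x := rfl
          omega
        have h2le : 2 ≤ m := by omega
        apply le_csSup hby
        refine ⟨h1, by simp at h2 ⊢; omega, ?_⟩
        rw [hc3y, ← hc3x, ← h3', heap_cons _ _ _ h2le, heap_cons _ _ _ h2le]
      · obtain ⟨h1, h2, h3'⟩ := Nat.sSup_mem ⟨3, hmem3y⟩ hby
        set m := sSup {j : ℕ | 1 ≤ j ∧ j ≤ (y :: tl).length ∧ heap (y :: tl) j = heap (y :: tl) 3}
        have h3le : 3 ≤ m := le_csSup hby hmem3y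
        have h2le : 2 ≤ m := by omega
        apply le_csSup hbx
        refine ⟨h1, by simp at h2 ⊢; omega, ?_⟩
        rw [hc3x, ← hc3y, ← h3', heap_cons _ _ _ h2le, heap_cons _ _ _ h2le]
    rw [beta, beta, if_neg (by rw [hc3x]; exact hc0), if_neg (by rw [hc3y]; exact hc0), hsup]

theorem stmt10 (k : ℕ) (hk : 2 ≤ k) (S : List ℕ) (hn : 4 ≤ S.length) (hsorted : S.Pairwise (· ≥ ·))
    (hP : MiserePCond k S)
    (t : ℕ) (ht1 : 1 ≤ t) (ht2 : t ≤ min (heap S 1) k)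
    (hstable : t ≤ heap S 1 - heap S 2) :
    ¬ MiserePCond k (List.orderedInsert (· ≥ ·) (heap S 1 - t) S.tail) := by
  rcases S with _ | ⟨a, S⟩; · simp at hn
  rcases S with _ | ⟨b, S⟩; · simp at hn
  rcases S with _ | ⟨c, S⟩; · simp at hn
  rcases S with _ | ⟨d, l⟩; · simp at hn
  have e1 : heap (a::b::c::d::l) 1 = a := rfl
  have e2 : heap (a::b::c::d::l) 2 = b := rfl
  have e3 : heap (a::b::c::d::l) 3 = c := rfl
  rw [e1] at ht2
  rw [e1, e2] at hstable
  have hta : t ≤ a := by omega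
  have htk : t ≤ k := by omega
  have hba : a ≥ b := (List.pairwise_cons.mp hsorted).1 b (by simp)
  have hcb : b ≥ c := (List.pairwise_cons.mp (List.pairwise_cons.mp hsorted).2).1 c (by simp)
  have hstable' : t ≤ a - b := hstable
  have hab : b + t ≤ a := by omega
  rw [e1]
  have hins : List.orderedInsert (· ≥ ·) (a - t) (b::c::d::l) = (a-t)::b::c::d::l := by
    simp only [List.orderedInsert]
    rw [if_pos (show (a - t) ≥ b by omega)]
  show ¬ MiserePCond k (List.orderedInsert (· ≥ ·) (a - t) (b::c::d::l))
  rw [hins]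
  have hbeta : beta ((a-t)::b::c::d::l) = beta (a::b::c::d::l) :=
    (beta_cons_eq a (a-t) (b::c::d::l) (by simp) (show (b::c::d::l).getD 1 0 < a by
      show c < a; omega)).symm
  intro hP'
  have f1 : heap ((a-t)::b::c::d::l) 1 = a - t := rfl
  have f2 : heap ((a-t)::b::c::d::l) 2 = b := rfl
  have f3 : heap ((a-t)::b::c::d::l) 3 = c := rfl
  unfold MiserePCond KNice KGood R at hP hP'
  rw [e1, e2, e3] at hP
  rw [f1, f2, f3, hbeta, Nat.sub_right_comm a t b] at hP'
  rw [Nat.even_iff, Nat.odd_iff] at hP hP'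
  have hK1 := key_mod k t a htk hta
  have hK2 := key_mod k t (a - b) htk hstable'
  have hb1 : a % (k+1) < k+1 := Nat.mod_lt _ (by omega)
  have hb2 : (a - t) % (k+1) < k+1 := Nat.mod_lt _ (by omega)
  have hb3 : (a - b) % (k+1) < k+1 := Nat.mod_lt _ (by omega)
  have hb4 : (a - b - t) % (k+1) < k+1 := Nat.mod_lt _ (by omega)
  have hb5 : b % (k+1) < k+1 := Nat.mod_lt _ (by omega)
  have hb6 : (b - c) % (k+1) < k+1 := Nat.mod_lt _ (by omega)
  generalize hg1 : a % (k+1) = A at hP hK1 hb1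
  generalize hg2 : (a - t) % (k+1) = A' at hP' hK1 hb2
  generalize hg3 : (a - b) % (k+1) = D at hP hK2 hb3
  generalize hg4 : (a - b - t) % (k+1) = D' at hP' hK2 hb4
  generalize hg5 : b % (k+1) = B at hP hP' hb5
  generalize hg6 : (b - c) % (k+1) = E at hP hP' hb6
  omega
end
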